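/- Let G be an observation, let j be live in G, and let i be a location not live in G (i.e., G has only finitely many vertices with location i). Then there exists a positive integer k such that for every k' ≥ k, there is no edge from the vertex (j,k',·) to any vertex with location i. -/

import Mathlib

/-- An observation: a DAG on vertices (location, positive index, action). -/
structure Observation (P E : Type*) where
  V : Set (P × ℕ × E)
  Z : Set ((P × ℕ × E) × (P × ℕ × E))
  edge_mem : ∀ p ∈ Z, p.1 ∈ V ∧ p.2 ∈ V
  pos_index : ∀ v ∈ V, 0 < v.2.1
  unique_index : ∀ v ∈ V, ∀ w ∈ V, v.1 = w.1 → v.2.1 = w.2.1 → v = w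
  downward : ∀ v ∈ V, ∀ k : ℕ, 0 < k → k < v.2.1 → ∃ e : E, (v.1, k, e) ∈ V
  consec : ∀ v ∈ V, ∀ w ∈ V, w.1 = v.1 → w.2.1 = v.2.1 + 1 → (v, w) ∈ Z
  live_edge : ∀ i j : P, i ≠ j → {w ∈ V | w.1 = j}.Infinite →
      ∀ v ∈ V, v.1 = i → ∃ w ∈ V, w.1 = j ∧ (v, w) ∈ Z
  trans : ∀ u v w, (u, v) ∈ Z → (v, w) ∈ Z → (u, w) ∈ Z
  irrefl : ∀ v, (v, v) ∉ Z

/-- A location is live in an observation iff infinitely many vertices have that location. -/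
def Observation.live {P E : Type*} (G : Observation P E) (i : P) : Prop :=
  {v ∈ G.V | v.1 = i}.Infinite

/-- If `j` is live in `G` and `i ≠ j` is not live in `G`, then there is a
positive integer `k` such that for all `k' ≥ k` there is no edge from the vertex
`(j, k', ·)` to any vertex with location `i`. -/
theorem observation_no_edges_to_crashed_location {P E : Type*}
    (G : Observation P E) {i j : P} (hij : i ≠ j)
    (hj : G.live j) (hi : ¬ G.live i) :
    ∃ k : ℕ, 0 < k ∧ ∀ k' ≥ k, ∀ e : E, (j, k', e) ∈ G.V →
      ∀ u ∈ G.V, u.1 = i → ((j, k', e), u) ∉ G.Z := by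
  classical
  have hSfin : {v ∈ G.V | v.1 = i}.Finite := Set.not_infinite.mp hi
  -- chain lemma: same-location vertices with smaller index are equal or connected
  have chain : ∀ b a : ℕ, ∀ v ∈ G.V, ∀ w ∈ G.V, v.1 = j → w.1 = j →
      v.2.1 = a → w.2.1 = b → a ≤ b → v = w ∨ (v, w) ∈ G.Z := by
    intro b
    induction b with
    | zero =>
      intro a v hv w hw _ _ _ hb _
      have := G.pos_index w hw; omega
    | succ n ih =>
      intro a v hv w hw hvj hwj ha hb hab
      rcases eq_or_lt_of_le hab with h | h
      · left; exact G.unique_index v hv w hw (hvj.trans hwj.symm) (by omega)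
      · have hn : 0 < n := by have := G.pos_index v hv; omega
        obtain ⟨e, he⟩ := G.downward w hw n hn (by omega)
        have hz : ((w.1, n, e), w) ∈ G.Z := G.consec _ he w hw rfl (by simp [hb])
        rcases ih a v hv _ he hvj hwj ha rfl (by omega) with h1 | h1
        · right; rwa [h1]
        · right; exact G.trans _ _ _ h1 hz
  set S := hSfin.toFinset with hS
  let g : P × ℕ × E → ℕ := fun u =>
    if h : u ∈ G.V ∧ u.1 = i then
      (Classical.choose (G.live_edge i j hij hj u h.1 h.2)).2.1 else 0
  refine ⟨S.sup g + 1, Nat.succ_pos _, ?_⟩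
  intro k' hk' e hve u hu hui hedge
  have hcond : u ∈ G.V ∧ u.1 = i := ⟨hu, hui⟩
  have huS : u ∈ S := by rw [hS, Set.Finite.mem_toFinset]; exact ⟨hu, hui⟩
  obtain ⟨hwV, hwj, hwz⟩ := Classical.choose_spec (G.live_edge i j hij hj u hcond.1 hcond.2)
  set w := Classical.choose (G.live_edge i j hij hj u hcond.1 hcond.2) with hwdef
  have hgu : g u = w.2.1 := by simp only [g, dif_pos hcond]; rfl
  have hwle : w.2.1 ≤ S.sup g := hgu ▸ Finset.le_sup huS
  have htw : ((j, k', e), w) ∈ G.Z := G.trans _ _ _ hedge hwz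
  rcases chain k' w.2.1 w hwV (j, k', e) hve hwj rfl rfl rfl (by omega) with h1 | h1
  · exact G.irrefl _ (h1 ▸ htw)
  · exact G.irrefl _ (G.trans _ _ _ htw h1)
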